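/- Let A ∈ ℝ^{m×n}, M ∈ ℝ^{m×q}, y ∈ ℝ^m, τ ≥ 0 and α ∈ [0,1], and for x ∈ ℝⁿ write ϑ(x) = Mᵀ(Ax − y). Then x* ∈ ℝⁿ is an optimal solution of the Dantzig selector problem min{‖x‖₁ : α‖Mᵀ(Ax − y)‖_∞ + (1−α)‖Mᵀ(Ax − y)‖₁ ≤ τ} if and only if there exist vectors t ∈ ℝⁿ, ξ ∈ ℝ, v ∈ ℝ^q and w⁽¹⁾, w⁽²⁾ ∈ ℝⁿ, w⁽³⁾ ∈ ℝ, w⁽⁴⁾, w⁽⁵⁾, w⁽⁶⁾, w⁽⁷⁾ ∈ ℝ^q, all with nonnegative components (t ≥ 0, ξ ≥ 0, v ≥ 0, w⁽ⁱ⁾ ≥ 0 for i = 1, …, 7), such that: x* ≤ t, −x* ≤ t, αξ + (1−α)eᵀv ≤ τ, −ξe ≤ ϑ(x*) ≤ ξe, ϑ(x*) ≤ v, −ϑ(x*) ≤ v, −w⁽¹⁾ + w⁽²⁾ + AᵀM(w⁽⁴⁾ − w⁽⁵⁾ − w⁽⁶⁾ + w⁽⁷⁾) = 0, w⁽¹⁾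 + w⁽²⁾ ≤ ẽ, −αw⁽³⁾ + eᵀw⁽⁴⁾ + eᵀw⁽⁵⁾ ≤ 0, −(1−α)w⁽³⁾e + w⁽⁶⁾ + w⁽⁷⁾ ≤ 0, and −τw⁽³⁾ + yᵀM(w⁽⁴⁾ − w⁽⁵⁾ − w⁽⁶⁾ + w⁽⁷⁾) = ẽᵀt. Moreover, any such tuple satisfies t = |x*|, ξ ≥ ‖ϑ(x*)‖_∞ and v ≥ |ϑ(x*)| componentwise. -/

import Mathlib

open Matrix

/-- The ℓ₁ norm on `Fin n → ℝ`. -/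
noncomputable def l1norm {n : ℕ} (x : Fin n → ℝ) : ℝ := ∑ i, |x i|

/-- The ℓ_∞ norm on `Fin n → ℝ`. -/
noncomputable def linfnorm {n : ℕ} (x : Fin n → ℝ) : ℝ := ⨆ i, |x i|

/-- The residual `ϑ(x) = Mᵀ(Ax − y)`. -/
noncomputable def resid {m n q : ℕ} (A : Matrix (Fin m) (Fin n) ℝ)
    (M : Matrix (Fin m) (Fin q) ℝ) (y : Fin m → ℝ) (x : Fin n → ℝ) : Fin q → ℝ :=
  Mᵀ.mulVec (A.mulVec x - y)

/-- The KKT system (3.9) for the Dantzig selector with mixed ℓ_∞/ℓ₁ constraint. -/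
def KKTsysDS {m n q : ℕ} (A : Matrix (Fin m) (Fin n) ℝ) (M : Matrix (Fin m) (Fin q) ℝ)
    (y : Fin m → ℝ) (τ α : ℝ) (x t : Fin n → ℝ) (ξ : ℝ) (v : Fin q → ℝ)
    (w1 w2 : Fin n → ℝ) (w3 : ℝ) (w4 w5 w6 w7 : Fin q → ℝ) : Prop :=
  (∀ i, x i ≤ t i) ∧ (∀ i, -x i ≤ t i) ∧
  α * ξ + (1 - α) * (∑ i, v i) ≤ τ ∧
  (∀ i, -ξ ≤ resid A M y x i) ∧ (∀ i, resid A M y x i ≤ ξ) ∧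
  (∀ i, resid A M y x i ≤ v i) ∧ (∀ i, -resid A M y x i ≤ v i) ∧
  -w1 + w2 + Aᵀ.mulVec (M.mulVec (w4 - w5 - w6 + w7)) = 0 ∧
  (∀ i, w1 i + w2 i ≤ 1) ∧
  -(α * w3) + (∑ i, w4 i) + (∑ i, w5 i) ≤ 0 ∧
  (∀ i, -((1 - α) * w3) + w6 i + w7 i ≤ 0) ∧
  -(τ * w3) + y ⬝ᵥ M.mulVec (w4 - w5 - w6 + w7) = ∑ i, t i ∧
  (∀ i, 0 ≤ t i) ∧ 0 ≤ ξ ∧ (∀ i, 0 ≤ v i) ∧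
  (∀ i, 0 ≤ w1 i) ∧ (∀ i, 0 ≤ w2 i) ∧ 0 ≤ w3 ∧
  (∀ i, 0 ≤ w4 i) ∧ (∀ i, 0 ≤ w5 i) ∧ (∀ i, 0 ≤ w6 i) ∧ (∀ i, 0 ≤ w7 i)

lemma linfnorm_nonneg {k : ℕ} (x : Fin k → ℝ) : 0 ≤ linfnorm x :=
  Real.iSup_nonneg fun i => abs_nonneg _

lemma abs_le_linfnorm {k : ℕ} (x : Fin k → ℝ) (i : Fin k) : |x i| ≤ linfnorm x := by
  rw [linfnorm]
  exact le_ciSup (Set.Finite.bddAbove (Set.finite_range (fun i => |x i|))) i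

lemma linfnorm_le {k : ℕ} {x : Fin k → ℝ} {a : ℝ} (h : ∀ i, |x i| ≤ a) (ha : 0 ≤ a) :
    linfnorm x ≤ a := Real.iSup_le h ha

lemma linfnorm_zero_of_isEmpty {k : ℕ} (hk : k = 0) (x : Fin k → ℝ) : linfnorm x = 0 := by
  subst hk
  rw [linfnorm]
  exact Real.iSup_of_isEmpty _

lemma l1norm_zero_of_isEmpty {k : ℕ} (hk : k = 0) (x : Fin k → ℝ) : l1norm x = 0 := by
  subst hk; simp [l1norm]

lemma resid_eq {m n q : ℕ} (A : Matrix (Fin m) (Fin n) ℝ)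
    (M : Matrix (Fin m) (Fin q) ℝ) (y : Fin m → ℝ) (z : Fin n → ℝ) :
    resid A M y z = (Mᵀ * A).mulVec z - Mᵀ.mulVec y := by
  rw [resid, Matrix.mulVec_sub, Matrix.mulVec_mulVec]

theorem farkasBartl : ∀ (k : ℕ) {V : Type} [AddCommGroup V] [Module ℝ V]
    (L : Fin k → V →ₗ[ℝ] ℝ) (c : V →ₗ[ℝ] ℝ),
    (∀ x : V, (∀ i, L i x ≤ 0) → c x ≤ 0) →
    ∃ u : Fin k → ℝ, (∀ i, 0 ≤ u i) ∧ ∀ x, c x = ∑ i, u i * L i x := by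
  intro k
  induction k with
  | zero =>
    intro V _ _ L c h
    refine ⟨fun i => 0, fun i => le_rfl, fun x => ?_⟩
    have h1 : c x ≤ 0 := h x (fun i => i.elim0)
    have h2 : c (-x) ≤ 0 := h (-x) (fun i => i.elim0)
    simp only [map_neg, neg_nonpos] at h2
    simp [le_antisymm h1 h2]
  | succ k ih =>
    intro V _ _ L c h
    by_cases hc : ∀ x : V, (∀ i : Fin k, L i.castSucc x ≤ 0) → c x ≤ 0
    · obtain ⟨u, hu, hcu⟩ := ih (fun i => L i.castSucc) c hc
      refine ⟨Fin.snoc u 0, ?_, fun x => ?_⟩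
      · intro i
        refine Fin.lastCases ?_ ?_ i
        · simp
        · intro j; simpa using hu j
      · rw [Fin.sum_univ_castSucc]
        simp [Fin.snoc_castSucc, hcu x]
    · push_neg at hc
      obtain ⟨y, hy, hcy⟩ := hc
      have hLy : 0 < L (Fin.last k) y := by
        by_contra hL
        push_neg at hL
        have := h y (fun i => Fin.lastCases hL hy i)
        exact absurd this (not_le.mpr hcy)
      set z : V := (L (Fin.last k) y)⁻¹ • y with hz
      have hz1 : L (Fin.last k) z = 1 := by
        simp [hz, _root_.map_smul, inv_mul_cancel₀ (ne_of_gt hLy)]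
      have hzi : ∀ i : Fin k, L i.castSucc z ≤ 0 := by
        intro i
        rw [hz, _root_.map_smul, smul_eq_mul]
        exact mul_nonpos_of_nonneg_of_nonpos (le_of_lt (inv_pos.mpr hLy)) (hy i)
      have hcz : 0 < c z := by
        rw [hz, _root_.map_smul, smul_eq_mul]
        exact mul_pos (inv_pos.mpr hLy) hcy
      set L' : Fin k → V →ₗ[ℝ] ℝ :=
        fun i => L i.castSucc - (L i.castSucc z) • L (Fin.last k) with hL'
      set c' : V →ₗ[ℝ] ℝ := c - (c z) • L (Fin.last k) with hc'
      have key : ∀ x : V, (∀ i : Fin k, L' i x ≤ 0) → c' x ≤ 0 := by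
        intro x hx
        have hhat : ∀ i : Fin (k+1), L i (x - (L (Fin.last k) x) • z) ≤ 0 := by
          intro i
          refine Fin.lastCases ?_ ?_ i
          · simp [map_sub, _root_.map_smul, smul_eq_mul, hz1]
          · intro j
            have := hx j
            simp only [hL', LinearMap.sub_apply, LinearMap.smul_apply, smul_eq_mul] at this
            rw [map_sub, _root_.map_smul, smul_eq_mul]
            linarith [this]
        have := h _ hhat
        rw [map_sub, _root_.map_smul, smul_eq_mul] at this
        simp only [hc', LinearMap.sub_apply, LinearMap.smul_apply, smul_eq_mul]
        linarith [this]
      obtain ⟨u, hu, hcu⟩ := ih L' c' key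
      refine ⟨Fin.snoc u (c z - ∑ i, u i * L i.castSucc z), ?_, fun x => ?_⟩
      · intro i
        refine Fin.lastCases ?_ ?_ i
        · simp only [Fin.snoc_last]
          have : ∑ i, u i * L i.castSucc z ≤ 0 :=
            Finset.sum_nonpos (fun i _ => mul_nonpos_of_nonneg_of_nonpos (hu i) (hzi i))
          linarith
        · intro j; simpa using hu j
      · have h1 := hcu x
        simp only [hc', hL', LinearMap.sub_apply, LinearMap.smul_apply, smul_eq_mul] at h1
        rw [Fin.sum_univ_castSucc]
        simp only [Fin.snoc_castSucc, Fin.snoc_last]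
        have : c x = ∑ i, u i * (L i.castSucc x - L i.castSucc z * L (Fin.last k) x)
            + c z * L (Fin.last k) x := by linarith
        rw [this]
        simp only [mul_sub, Finset.sum_sub_distrib, sub_mul, Finset.sum_mul]
        ring_nf
        congr 1
        exact Finset.sum_congr rfl (fun i _ => by ring)

theorem farkasFin {k : ℕ} {J : Type} [Fintype J] [DecidableEq J]
    (A : Matrix (Fin k) J ℝ) (b : Fin k → ℝ)
    (h : ¬ ∃ x : J → ℝ, A.mulVec x ≤ b) :
    ∃ u : Fin k → ℝ, (∀ i, 0 ≤ u i) ∧ (∀ j, ∑ i, u i * A i j = 0) ∧ ∑ i, u i * b i < 0 := by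
  classical
  set L : Fin k → ((J → ℝ) × ℝ) →ₗ[ℝ] ℝ := fun i =>
    { toFun := fun p => (fun j => A i j) ⬝ᵥ p.1 - p.2 * b i
      map_add' := by
        intro p r
        simp only [dotProduct, Pi.add_apply, Prod.fst_add, Prod.snd_add]
        have : ∀ x : J, A i x * (p.1 x + r.1 x) = A i x * p.1 x + A i x * r.1 x :=
          fun x => by ring
        rw [Finset.sum_congr rfl (fun x _ => this x), Finset.sum_add_distrib]
        ring
      map_smul' := by
        intro c p
        simp only [dotProduct, Prod.smul_fst, Prod.smul_snd, smul_eq_mul, Pi.smul_apply,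
          RingHom.id_apply]
        rw [mul_sub, Finset.mul_sum]
        refine congrArg₂ (· - ·) (Finset.sum_congr rfl (fun x _ => by ring)) (by ring) } with hL
  set c : ((J → ℝ) × ℝ) →ₗ[ℝ] ℝ :=
    { toFun := fun p => p.2
      map_add' := by intro p r; simp
      map_smul' := by intro c p; simp } with hc
  have hyp : ∀ p : (J → ℝ) × ℝ, (∀ i, L i p ≤ 0) → c p ≤ 0 := by
    intro p hp
    by_contra hs
    push_neg at hs
    simp only [hc, LinearMap.coe_mk, AddHom.coe_mk] at hs
    apply h
    refine ⟨p.2⁻¹ • p.1, fun i => ?_⟩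
    have := hp i
    simp only [hL, LinearMap.coe_mk, AddHom.coe_mk, sub_nonpos] at this
    have h2 : A.mulVec (p.2⁻¹ • p.1) i = p.2⁻¹ * ((fun j => A i j) ⬝ᵥ p.1) := by
      simp only [mulVec, dotProduct, Pi.smul_apply, smul_eq_mul, Finset.mul_sum]
      exact Finset.sum_congr rfl (fun x _ => by ring)
    rw [h2]
    calc p.2⁻¹ * ((fun j => A i j) ⬝ᵥ p.1) ≤ p.2⁻¹ * (p.2 * b i) := by
          exact mul_le_mul_of_nonneg_left this (le_of_lt (inv_pos.mpr hs))
      _ = b i := by field_simp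
  obtain ⟨u, hu, hcu⟩ := farkasBartl k L c hyp
  refine ⟨u, hu, fun j => ?_, ?_⟩
  · have := hcu (Pi.single j 1, 0)
    simp only [hc, hL, LinearMap.coe_mk, AddHom.coe_mk, mul_zero, zero_mul, sub_zero] at this
    rw [eq_comm] at this
    simpa [dotProduct_single] using this
  · have := hcu (0, 1)
    simp only [hc, hL, LinearMap.coe_mk, AddHom.coe_mk, one_mul, dotProduct_zero,
      zero_sub, mul_neg] at this
    have h2 : ∑ i, u i * b i = -1 := by
      rw [Finset.sum_neg_distrib] at this
      linarith
    rw [h2]; norm_num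

theorem farkasGen {I J : Type} [Fintype I] [Fintype J] [DecidableEq J]
    (A : Matrix I J ℝ) (b : I → ℝ)
    (h : ¬ ∃ x : J → ℝ, A.mulVec x ≤ b) :
    ∃ u : I → ℝ, (∀ i, 0 ≤ u i) ∧ (∀ j, ∑ i, u i * A i j = 0) ∧ ∑ i, u i * b i < 0 := by
  classical
  obtain ⟨e⟩ : Nonempty (I ≃ Fin (Fintype.card I)) := ⟨Fintype.equivFin I⟩
  have h' : ¬ ∃ x : J → ℝ, (A.submatrix e.symm id).mulVec x ≤ b ∘ e.symm := by
    rintro ⟨x, hx⟩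
    apply h
    refine ⟨x, fun i => ?_⟩
    have := hx (e i)
    simpa [mulVec, dotProduct] using this
  obtain ⟨u, hu, h1, h2⟩ := farkasFin (A.submatrix e.symm id) (b ∘ e.symm) h'
  refine ⟨u ∘ e, fun i => hu (e i), fun j => ?_, ?_⟩
  · rw [← h1 j]
    exact Fintype.sum_equiv e (fun i => (u ∘ e) i * A i j)
      (fun i' => u i' * A.submatrix e.symm id i' j) (fun i => by simp)
  · calc ∑ i, (u ∘ e) i * b i = ∑ i', u i' * (b ∘ e.symm) i' :=
        Fintype.sum_equiv e (fun i => (u ∘ e) i * b i)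
          (fun i' => u i' * (b ∘ e.symm) i') (fun i => by simp)
      _ < 0 := h2

theorem lpDual {I J : Type} [Fintype I] [Fintype J] [DecidableEq I] [DecidableEq J]
    (A : Matrix I J ℝ) (b : I → ℝ) (c : J → ℝ) (x0 : J → ℝ)
    (hfeas : A.mulVec x0 ≤ b)
    (hopt : ∀ x : J → ℝ, A.mulVec x ≤ b → c ⬝ᵥ x0 ≤ c ⬝ᵥ x) :
    ∃ u : I → ℝ, (∀ i, 0 ≤ u i) ∧ (∀ j, ∑ i, u i * A i j = -c j) ∧
      ∑ i, u i * b i = -(c ⬝ᵥ x0) := by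
  classical
  set D : Matrix (J ⊕ J ⊕ I ⊕ Unit) I ℝ := fun r i =>
    match r with
    | Sum.inl j => A i j
    | Sum.inr (Sum.inl j) => -A i j
    | Sum.inr (Sum.inr (Sum.inl i')) => if i' = i then -1 else 0
    | Sum.inr (Sum.inr (Sum.inr _)) => b i
    with hD
  set β : J ⊕ J ⊕ I ⊕ Unit → ℝ := fun r =>
    match r with
    | Sum.inl j => -c j
    | Sum.inr (Sum.inl j) => c j
    | Sum.inr (Sum.inr (Sum.inl _)) => 0
    | Sum.inr (Sum.inr (Sum.inr _)) => -(c ⬝ᵥ x0)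
    with hβ
  have hDfeas : ∃ u : I → ℝ, D.mulVec u ≤ β := by
    by_contra hinf
    obtain ⟨w, hw, hcol, hobj⟩ := farkasGen D β hinf
    set p : J → ℝ := fun j => w (Sum.inl j) with hp
    set p' : J → ℝ := fun j => w (Sum.inr (Sum.inl j)) with hp'
    set μ : ℝ := w (Sum.inr (Sum.inr (Sum.inr ()))) with hμ
    set d : J → ℝ := p - p' with hd
    have hcol' : ∀ i : I, (A.mulVec d) i + μ * b i = w (Sum.inr (Sum.inr (Sum.inl i))) := by
      intro i
      have h0 := hcol i
      rw [Fintype.sum_sum_type, Fintype.sum_sum_type, Fintype.sum_sum_type] at h0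
      have hunit : ∀ f : Unit → ℝ, ∑ x : Unit, f x = f () := fun f => by
        simp
      rw [hunit] at h0
      simp only [hD, mul_ite, mul_zero, mul_neg, mul_one, Finset.sum_ite_eq',
        Finset.mem_univ, if_true] at h0
      have hAd : (A.mulVec d) i = ∑ j, p j * A i j - ∑ j, p' j * A i j := by
        rw [hd, Matrix.mulVec_sub]
        simp only [Pi.sub_apply, mulVec, dotProduct]
        rw [← Finset.sum_sub_distrib, ← Finset.sum_sub_distrib]
        exact Finset.sum_congr rfl (fun j _ => by ring)
      have hneg : ∑ j, -(w (Sum.inr (Sum.inl j)) * A i j) = -∑ j, p' j * A i j := by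
        rw [← Finset.sum_neg_distrib]
      rw [hneg] at h0
      rw [hAd]
      have hpp : ∑ j, w (Sum.inl j) * A i j = ∑ j, p j * A i j := rfl
      rw [hpp] at h0
      rw [hμ]
      linarith
    have hobj' : -(c ⬝ᵥ d) < μ * (c ⬝ᵥ x0) := by
      rw [Fintype.sum_sum_type, Fintype.sum_sum_type, Fintype.sum_sum_type] at hobj
      have hunit : ∀ f : Unit → ℝ, ∑ x : Unit, f x = f () := fun f => by simp
      rw [hunit] at hobj
      simp only [hβ, mul_zero, Finset.sum_const_zero] at hobj
      have h1 : ∑ j, w (Sum.inl j) * -c j = -∑ j, p j * c j := by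
        rw [← Finset.sum_neg_distrib]
        exact Finset.sum_congr rfl (fun j _ => by rw [hp]; ring)
      have h2 : ∑ j, w (Sum.inr (Sum.inl j)) * c j = ∑ j, p' j * c j := rfl
      rw [h1, h2] at hobj
      have h3 : c ⬝ᵥ d = ∑ j, p j * c j - ∑ j, p' j * c j := by
        rw [hd]
        simp only [dotProduct, Pi.sub_apply]
        rw [← Finset.sum_sub_distrib]
        exact Finset.sum_congr rfl (fun j _ => by ring)
      rw [h3, hμ]
      nlinarith [hobj]
    have hμ0 : 0 ≤ μ := hw _
    rcases lt_or_eq_of_le hμ0 with hμpos | hμzero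
    · have hfeas' : A.mulVec (μ⁻¹ • (-d)) ≤ b := by
        intro i
        have h1 := hcol' i
        have h2 : 0 ≤ w (Sum.inr (Sum.inr (Sum.inl i))) := hw _
        rw [Matrix.mulVec_smul, Matrix.mulVec_neg]
        simp only [Pi.smul_apply, Pi.neg_apply, smul_eq_mul]
        have h4 : -(A.mulVec d i) ≤ μ * b i := by linarith
        calc μ⁻¹ * -(A.mulVec d i) ≤ μ⁻¹ * (μ * b i) :=
              mul_le_mul_of_nonneg_left h4 (le_of_lt (inv_pos.mpr hμpos))
          _ = b i := by field_simp
      have hle := hopt _ hfeas'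
      have h5 : c ⬝ᵥ (μ⁻¹ • (-d)) = μ⁻¹ * -(c ⬝ᵥ d) := by
        rw [dotProduct_smul, dotProduct_neg, smul_eq_mul]
      rw [h5] at hle
      have h6 : μ⁻¹ * -(c ⬝ᵥ d) < μ⁻¹ * (μ * (c ⬝ᵥ x0)) := by
        exact mul_lt_mul_of_pos_left hobj' (inv_pos.mpr hμpos)
      have h7 : μ⁻¹ * (μ * (c ⬝ᵥ x0)) = c ⬝ᵥ x0 := by field_simp
      linarith
    · have hAd : ∀ i, 0 ≤ A.mulVec d i := by
        intro i
        have h1 := hcol' i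
        have h2 : 0 ≤ w (Sum.inr (Sum.inr (Sum.inl i))) := hw _
        rw [← hμzero] at h1
        linarith
      have hfeas' : A.mulVec (x0 - d) ≤ b := by
        intro i
        rw [Matrix.mulVec_sub]
        have := hfeas i
        have := hAd i
        simp only [Pi.sub_apply]
        linarith
      have hle := hopt _ hfeas'
      have h5 : c ⬝ᵥ (x0 - d) = c ⬝ᵥ x0 - c ⬝ᵥ d := dotProduct_sub c x0 d
      rw [h5] at hle
      rw [← hμzero, zero_mul] at hobj'
      linarith
  obtain ⟨u, hu⟩ := hDfeas
  have hmv : ∀ r, D.mulVec u r ≤ β r := hu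
  have hnn : ∀ i, 0 ≤ u i := by
    intro i
    have h0 := hmv (Sum.inr (Sum.inr (Sum.inl i)))
    simp only [hD, hβ, mulVec, dotProduct, ite_mul, neg_one_mul, zero_mul,
      Finset.sum_ite_eq', Finset.sum_ite_eq, Finset.mem_univ, if_true] at h0
    linarith
  have hle : ∀ j, ∑ i, u i * A i j ≤ -c j := by
    intro j
    have h0 := hmv (Sum.inl j)
    simp only [hD, hβ, mulVec, dotProduct] at h0
    calc ∑ i, u i * A i j = ∑ i, A i j * u i :=
          Finset.sum_congr rfl (fun i _ => by ring)
      _ ≤ -c j := h0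
  have hge : ∀ j, -c j ≤ ∑ i, u i * A i j := by
    intro j
    have h0 := hmv (Sum.inr (Sum.inl j))
    simp only [hD, hβ, mulVec, dotProduct] at h0
    have h1 : ∑ i, -A i j * u i = -∑ i, u i * A i j := by
      rw [← Finset.sum_neg_distrib]; exact Finset.sum_congr rfl (fun i _ => by ring)
    rw [h1] at h0
    linarith
  have heqcol : ∀ j, ∑ i, u i * A i j = -c j := fun j => le_antisymm (hle j) (hge j)
  refine ⟨u, hnn, heqcol, le_antisymm ?_ ?_⟩
  · have h0 := hmv (Sum.inr (Sum.inr (Sum.inr ())))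
    simp only [hD, hβ, mulVec, dotProduct] at h0
    calc ∑ i, u i * b i = ∑ i, b i * u i :=
          Finset.sum_congr rfl (fun i _ => by ring)
      _ ≤ -(c ⬝ᵥ x0) := h0
  · have h1 : ∑ i, u i * (A.mulVec x0) i ≤ ∑ i, u i * b i :=
      Finset.sum_le_sum (fun i _ => mul_le_mul_of_nonneg_left (hfeas i) (hnn i))
    have h2 : ∑ i, u i * (A.mulVec x0) i = ∑ j, (∑ i, u i * A i j) * x0 j := by
      simp only [mulVec, dotProduct, Finset.mul_sum, Finset.sum_mul]
      rw [Finset.sum_comm]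
      exact Finset.sum_congr rfl (fun i _ => Finset.sum_congr rfl (fun j _ => by ring))
    have h3 : ∑ j, (∑ i, u i * A i j) * x0 j = -(c ⬝ᵥ x0) := by
      simp only [dotProduct]
      rw [← Finset.sum_neg_distrib]
      exact Finset.sum_congr rfl (fun j _ => by rw [heqcol j]; ring)
    linarith

def bigA (n q : ℕ) (G : Matrix (Fin q) (Fin n) ℝ) (α : ℝ) :
    Matrix (Fin n ⊕ (Fin n ⊕ (Unit ⊕ (Fin q ⊕ (Fin q ⊕ (Fin q ⊕ Fin q))))))
      (Fin n ⊕ (Fin n ⊕ (Unit ⊕ Fin q))) ℝ := fun r j =>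
  match r, j with
  | Sum.inl i, Sum.inl j => if i = j then 1 else 0
  | Sum.inl i, Sum.inr (Sum.inl j) => if i = j then -1 else 0
  | Sum.inl _, Sum.inr (Sum.inr _) => 0
  | Sum.inr (Sum.inl i), Sum.inl j => if i = j then -1 else 0
  | Sum.inr (Sum.inl i), Sum.inr (Sum.inl j) => if i = j then -1 else 0
  | Sum.inr (Sum.inl _), Sum.inr (Sum.inr _) => 0
  | Sum.inr (Sum.inr (Sum.inl _)), Sum.inl _ => 0
  | Sum.inr (Sum.inr (Sum.inl _)), Sum.inr (Sum.inl _) => 0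
  | Sum.inr (Sum.inr (Sum.inl _)), Sum.inr (Sum.inr (Sum.inl _)) => α
  | Sum.inr (Sum.inr (Sum.inl _)), Sum.inr (Sum.inr (Sum.inr _)) => 1 - α
  | Sum.inr (Sum.inr (Sum.inr (Sum.inl i))), Sum.inl j => -G i j
  | Sum.inr (Sum.inr (Sum.inr (Sum.inl _))), Sum.inr (Sum.inl _) => 0
  | Sum.inr (Sum.inr (Sum.inr (Sum.inl _))), Sum.inr (Sum.inr (Sum.inl _)) => -1
  | Sum.inr (Sum.inr (Sum.inr (Sum.inl _))), Sum.inr (Sum.inr (Sum.inr _)) => 0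
  | Sum.inr (Sum.inr (Sum.inr (Sum.inr (Sum.inl i)))), Sum.inl j => G i j
  | Sum.inr (Sum.inr (Sum.inr (Sum.inr (Sum.inl _)))), Sum.inr (Sum.inl _) => 0
  | Sum.inr (Sum.inr (Sum.inr (Sum.inr (Sum.inl _)))), Sum.inr (Sum.inr (Sum.inl _)) => -1
  | Sum.inr (Sum.inr (Sum.inr (Sum.inr (Sum.inl _)))), Sum.inr (Sum.inr (Sum.inr _)) => 0
  | Sum.inr (Sum.inr (Sum.inr (Sum.inr (Sum.inr (Sum.inl i))))), Sum.inl j => G i j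
  | Sum.inr (Sum.inr (Sum.inr (Sum.inr (Sum.inr (Sum.inl _))))), Sum.inr (Sum.inl _) => 0
  | Sum.inr (Sum.inr (Sum.inr (Sum.inr (Sum.inr (Sum.inl _))))), Sum.inr (Sum.inr (Sum.inl _)) => 0
  | Sum.inr (Sum.inr (Sum.inr (Sum.inr (Sum.inr (Sum.inl i))))), Sum.inr (Sum.inr (Sum.inr j)) =>
      if i = j then -1 else 0
  | Sum.inr (Sum.inr (Sum.inr (Sum.inr (Sum.inr (Sum.inr i))))), Sum.inl j => -G i j
  | Sum.inr (Sum.inr (Sum.inr (Sum.inr (Sum.inr (Sum.inr _))))), Sum.inr (Sum.inl _) => 0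
  | Sum.inr (Sum.inr (Sum.inr (Sum.inr (Sum.inr (Sum.inr _))))), Sum.inr (Sum.inr (Sum.inl _)) => 0
  | Sum.inr (Sum.inr (Sum.inr (Sum.inr (Sum.inr (Sum.inr i))))), Sum.inr (Sum.inr (Sum.inr j)) =>
      if i = j then -1 else 0

def bigb (n q : ℕ) (g : Fin q → ℝ) (τ : ℝ) :
    (Fin n ⊕ (Fin n ⊕ (Unit ⊕ (Fin q ⊕ (Fin q ⊕ (Fin q ⊕ Fin q)))))) → ℝ := fun r =>
  match r with
  | Sum.inl _ => 0
  | Sum.inr (Sum.inl _) => 0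
  | Sum.inr (Sum.inr (Sum.inl _)) => τ
  | Sum.inr (Sum.inr (Sum.inr (Sum.inl i))) => -g i
  | Sum.inr (Sum.inr (Sum.inr (Sum.inr (Sum.inl i)))) => g i
  | Sum.inr (Sum.inr (Sum.inr (Sum.inr (Sum.inr (Sum.inl i))))) => g i
  | Sum.inr (Sum.inr (Sum.inr (Sum.inr (Sum.inr (Sum.inr i))))) => -g i

def bigc (n q : ℕ) : (Fin n ⊕ (Fin n ⊕ (Unit ⊕ Fin q))) → ℝ := fun j =>
  match j with
  | Sum.inr (Sum.inl _) => 1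
  | _ => 0

lemma sumJT {n q : ℕ} (f : (Fin n ⊕ (Fin n ⊕ (Unit ⊕ Fin q))) → ℝ) :
    ∑ j, f j = (∑ j, f (Sum.inl j)) + ((∑ j, f (Sum.inr (Sum.inl j))) +
      (f (Sum.inr (Sum.inr (Sum.inl ()))) + ∑ j, f (Sum.inr (Sum.inr (Sum.inr j))))) := by
  rw [Fintype.sum_sum_type, Fintype.sum_sum_type, Fintype.sum_sum_type]
  simp

lemma sumIT {n q : ℕ}
    (f : (Fin n ⊕ (Fin n ⊕ (Unit ⊕ (Fin q ⊕ (Fin q ⊕ (Fin q ⊕ Fin q)))))) → ℝ) :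
    ∑ r, f r = (∑ i, f (Sum.inl i)) + ((∑ i, f (Sum.inr (Sum.inl i))) +
      (f (Sum.inr (Sum.inr (Sum.inl ()))) +
      ((∑ i, f (Sum.inr (Sum.inr (Sum.inr (Sum.inl i))))) +
      ((∑ i, f (Sum.inr (Sum.inr (Sum.inr (Sum.inr (Sum.inl i)))))) +
      ((∑ i, f (Sum.inr (Sum.inr (Sum.inr (Sum.inr (Sum.inr (Sum.inl i))))))) +
        ∑ i, f (Sum.inr (Sum.inr (Sum.inr (Sum.inr (Sum.inr (Sum.inr i))))))))))) := by
  rw [Fintype.sum_sum_type, Fintype.sum_sum_type, Fintype.sum_sum_type,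
    Fintype.sum_sum_type, Fintype.sum_sum_type, Fintype.sum_sum_type]
  simp

section rows
variable {n q : ℕ} (G : Matrix (Fin q) (Fin n) ℝ) (α : ℝ)
  (P : (Fin n ⊕ (Fin n ⊕ (Unit ⊕ Fin q))) → ℝ)

lemma bigA_row1 (i : Fin n) : (bigA n q G α).mulVec P (Sum.inl i) =
    P (Sum.inl i) - P (Sum.inr (Sum.inl i)) := by
  show ∑ j, bigA n q G α (Sum.inl i) j * P j = _
  rw [sumJT]
  simp [bigA, ite_mul, Finset.sum_ite_eq, sub_eq_add_neg]

lemma bigA_row2 (i : Fin n) : (bigA n q G α).mulVec P (Sum.inr (Sum.inl i)) =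
    -P (Sum.inl i) - P (Sum.inr (Sum.inl i)) := by
  show ∑ j, bigA n q G α (Sum.inr (Sum.inl i)) j * P j = _
  rw [sumJT]
  simp [bigA, ite_mul, Finset.sum_ite_eq, sub_eq_add_neg]

lemma bigA_row3 : (bigA n q G α).mulVec P (Sum.inr (Sum.inr (Sum.inl ()))) =
    α * P (Sum.inr (Sum.inr (Sum.inl ()))) +
      (1 - α) * ∑ j, P (Sum.inr (Sum.inr (Sum.inr j))) := by
  show ∑ j, bigA n q G α (Sum.inr (Sum.inr (Sum.inl ()))) j * P j = _
  rw [sumJT]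
  simp [bigA, Finset.mul_sum]

lemma bigA_row4 (i : Fin q) :
    (bigA n q G α).mulVec P (Sum.inr (Sum.inr (Sum.inr (Sum.inl i)))) =
    -(∑ j, G i j * P (Sum.inl j)) - P (Sum.inr (Sum.inr (Sum.inl ()))) := by
  show ∑ j, bigA n q G α (Sum.inr (Sum.inr (Sum.inr (Sum.inl i)))) j * P j = _
  rw [sumJT]
  simp [bigA, Finset.sum_neg_distrib, sub_eq_add_neg]

lemma bigA_row5 (i : Fin q) :
    (bigA n q G α).mulVec P (Sum.inr (Sum.inr (Sum.inr (Sum.inr (Sum.inl i))))) =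
    (∑ j, G i j * P (Sum.inl j)) - P (Sum.inr (Sum.inr (Sum.inl ()))) := by
  show ∑ j, bigA n q G α (Sum.inr (Sum.inr (Sum.inr (Sum.inr (Sum.inl i))))) j * P j = _
  rw [sumJT]
  simp [bigA, sub_eq_add_neg]

lemma bigA_row6 (i : Fin q) :
    (bigA n q G α).mulVec P (Sum.inr (Sum.inr (Sum.inr (Sum.inr (Sum.inr (Sum.inl i)))))) =
    (∑ j, G i j * P (Sum.inl j)) - P (Sum.inr (Sum.inr (Sum.inr i))) := by
  show ∑ j, bigA n q G α (Sum.inr (Sum.inr (Sum.inr (Sum.inr (Sum.inr (Sum.inl i)))))) j * P j = _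
  rw [sumJT]
  simp [bigA, ite_mul, Finset.sum_ite_eq, sub_eq_add_neg]

lemma bigA_row7 (i : Fin q) :
    (bigA n q G α).mulVec P (Sum.inr (Sum.inr (Sum.inr (Sum.inr (Sum.inr (Sum.inr i)))))) =
    -(∑ j, G i j * P (Sum.inl j)) - P (Sum.inr (Sum.inr (Sum.inr i))) := by
  show ∑ j, bigA n q G α (Sum.inr (Sum.inr (Sum.inr (Sum.inr (Sum.inr (Sum.inr i)))))) j * P j = _
  rw [sumJT]
  simp [bigA, ite_mul, Finset.sum_ite_eq, Finset.sum_neg_distrib, sub_eq_add_neg]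

lemma bigc_dot : bigc n q ⬝ᵥ P = ∑ j, P (Sum.inr (Sum.inl j)) := by
  rw [dotProduct, sumJT]
  simp [bigc]

end rows

section cols
variable {n q : ℕ} (G : Matrix (Fin q) (Fin n) ℝ) (g : Fin q → ℝ) (τ α : ℝ)
  (u : (Fin n ⊕ (Fin n ⊕ (Unit ⊕ (Fin q ⊕ (Fin q ⊕ (Fin q ⊕ Fin q)))))) → ℝ)

lemma bigA_col1 (j : Fin n) : ∑ r, u r * bigA n q G α r (Sum.inl j) =
    u (Sum.inl j) - u (Sum.inr (Sum.inl j))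
    - ∑ i, u (Sum.inr (Sum.inr (Sum.inr (Sum.inl i)))) * G i j
    + ∑ i, u (Sum.inr (Sum.inr (Sum.inr (Sum.inr (Sum.inl i))))) * G i j
    + ∑ i, u (Sum.inr (Sum.inr (Sum.inr (Sum.inr (Sum.inr (Sum.inl i)))))) * G i j
    - ∑ i, u (Sum.inr (Sum.inr (Sum.inr (Sum.inr (Sum.inr (Sum.inr i)))))) * G i j := by
  rw [sumIT]
  simp [bigA, mul_ite, Finset.sum_ite_eq', Finset.sum_neg_distrib, sub_eq_add_neg, mul_comm]
  ring

lemma bigA_col2 (j : Fin n) : ∑ r, u r * bigA n q G α r (Sum.inr (Sum.inl j)) =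
    -u (Sum.inl j) - u (Sum.inr (Sum.inl j)) := by
  rw [sumIT]
  simp [bigA, mul_ite, Finset.sum_ite_eq', sub_eq_add_neg]

lemma bigA_col3 : ∑ r, u r * bigA n q G α r (Sum.inr (Sum.inr (Sum.inl ()))) =
    α * u (Sum.inr (Sum.inr (Sum.inl ())))
    - ∑ i, u (Sum.inr (Sum.inr (Sum.inr (Sum.inl i))))
    - ∑ i, u (Sum.inr (Sum.inr (Sum.inr (Sum.inr (Sum.inl i))))) := by
  rw [sumIT]
  simp [bigA, Finset.sum_neg_distrib, sub_eq_add_neg, mul_comm]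
  ring

lemma bigA_col4 (i : Fin q) : ∑ r, u r * bigA n q G α r (Sum.inr (Sum.inr (Sum.inr i))) =
    (1 - α) * u (Sum.inr (Sum.inr (Sum.inl ())))
    - u (Sum.inr (Sum.inr (Sum.inr (Sum.inr (Sum.inr (Sum.inl i))))))
    - u (Sum.inr (Sum.inr (Sum.inr (Sum.inr (Sum.inr (Sum.inr i)))))) := by
  rw [sumIT]
  simp [bigA, mul_ite, Finset.sum_ite_eq', sub_eq_add_neg, mul_comm]
  ring

lemma bigb_dot : ∑ r, u r * bigb n q g τ r =
    τ * u (Sum.inr (Sum.inr (Sum.inl ())))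
    - ∑ i, u (Sum.inr (Sum.inr (Sum.inr (Sum.inl i)))) * g i
    + ∑ i, u (Sum.inr (Sum.inr (Sum.inr (Sum.inr (Sum.inl i))))) * g i
    + ∑ i, u (Sum.inr (Sum.inr (Sum.inr (Sum.inr (Sum.inr (Sum.inl i)))))) * g i
    - ∑ i, u (Sum.inr (Sum.inr (Sum.inr (Sum.inr (Sum.inr (Sum.inr i)))))) * g i := by
  rw [sumIT]
  simp [bigb, Finset.sum_neg_distrib, sub_eq_add_neg, mul_comm]
  ring

end cols

theorem kkt_weak {m n q : ℕ} (A : Matrix (Fin m) (Fin n) ℝ) (M : Matrix (Fin m) (Fin q) ℝ)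
    (y : Fin m → ℝ) (τ α : ℝ) (hα0 : 0 ≤ α) (hα1 : α ≤ 1)
    (xstar t : Fin n → ℝ) (ξ : ℝ) (v : Fin q → ℝ) (w1 w2 : Fin n → ℝ) (w3 : ℝ)
    (w4 w5 w6 w7 : Fin q → ℝ)
    (hk : KKTsysDS A M y τ α xstar t ξ v w1 w2 w3 w4 w5 w6 w7) :
    (α * linfnorm (resid A M y xstar) + (1 - α) * l1norm (resid A M y xstar) ≤ τ) ∧
    (∀ i, |xstar i| ≤ t i) ∧
    (∀ z : Fin n → ℝ,
      α * linfnorm (resid A M y z) + (1 - α) * l1norm (resid A M y z) ≤ τ →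
      ∑ i, t i ≤ l1norm z) := by
  obtain ⟨h1, h2, h3, h4, h5, h6, h7, h8, h9, h10, h11, h12, h13, h14, h15,
    h16, h17, h18, h19, h20, h21, h22⟩ := hk
  have habs : ∀ i, |xstar i| ≤ t i := fun i => abs_le.mpr ⟨by linarith [h2 i], h1 i⟩
  have hfeas : α * linfnorm (resid A M y xstar) + (1 - α) * l1norm (resid A M y xstar) ≤ τ := by
    have e1 : linfnorm (resid A M y xstar) ≤ ξ :=
      linfnorm_le (fun i => abs_le.mpr ⟨h4 i, h5 i⟩) h14
    have e2 : l1norm (resid A M y xstar) ≤ ∑ i, v i := by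
      rw [l1norm]
      exact Finset.sum_le_sum (fun i _ => abs_le.mpr ⟨by linarith [h7 i], h6 i⟩)
    have e3 : α * linfnorm (resid A M y xstar) ≤ α * ξ :=
      mul_le_mul_of_nonneg_left e1 hα0
    have e4 : (1 - α) * l1norm (resid A M y xstar) ≤ (1 - α) * ∑ i, v i :=
      mul_le_mul_of_nonneg_left e2 (by linarith)
    linarith
  refine ⟨hfeas, habs, fun z hz => ?_⟩
  set s : Fin q → ℝ := w4 - w5 - w6 + w7 with hs
  set R : Fin q → ℝ := resid A M y z with hR
  -- stationarity pointwise
  have hTj : ∀ j, (Aᵀ.mulVec (M.mulVec s)) j = w1 j - w2 j := by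
    intro j
    have h0 := congrFun h8 j
    simp only [Pi.add_apply, Pi.neg_apply, Pi.zero_apply] at h0
    linarith
  have hdot : ∑ j, (w1 j - w2 j) * z j = s ⬝ᵥ R + s ⬝ᵥ Mᵀ.mulVec y := by
    have e1 : ∑ j, (w1 j - w2 j) * z j = (Aᵀ.mulVec (M.mulVec s)) ⬝ᵥ z := by
      simp only [dotProduct]
      exact Finset.sum_congr rfl (fun j _ => by rw [hTj j])
    have e2 : (Aᵀ.mulVec (M.mulVec s)) ⬝ᵥ z = (M.mulVec s) ⬝ᵥ (A.mulVec z) := by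
      rw [Matrix.mulVec_transpose, ← Matrix.dotProduct_mulVec]
    have e3 : (M.mulVec s) ⬝ᵥ (A.mulVec z) = s ⬝ᵥ (Mᵀ.mulVec (A.mulVec z)) := by
      rw [dotProduct_comm, Matrix.dotProduct_mulVec, ← Matrix.mulVec_transpose,
        dotProduct_comm]
    have e4 : Mᵀ.mulVec (A.mulVec z) = R + Mᵀ.mulVec y := by
      rw [hR, resid, Matrix.mulVec_sub, sub_add_cancel]
    rw [e1, e2, e3, e4, dotProduct_add]
  have hsR : -(τ * w3) ≤ s ⬝ᵥ R := by
    have hterm : ∀ i, -(s i * R i) ≤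
        (w4 i + w5 i) * |R i| + (w6 i + w7 i) * |R i| := by
      intro i
      have habs' : |s i| ≤ w4 i + w5 i + w6 i + w7 i := by
        rw [hs]
        simp only [Pi.add_apply, Pi.sub_apply]
        exact abs_le.mpr ⟨by linarith [h19 i, h20 i, h21 i, h22 i],
          by linarith [h19 i, h20 i, h21 i, h22 i]⟩
      calc -(s i * R i) ≤ |s i * R i| := by
            linarith [neg_abs_le (s i * R i), le_abs_self (s i * R i)]
        _ = |s i| * |R i| := abs_mul _ _
        _ ≤ (w4 i + w5 i + w6 i + w7 i) * |R i| :=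
            mul_le_mul_of_nonneg_right habs' (abs_nonneg _)
        _ = (w4 i + w5 i) * |R i| + (w6 i + w7 i) * |R i| := by ring
    have hsum : -(s ⬝ᵥ R) ≤ ∑ i, (w4 i + w5 i) * |R i| + ∑ i, (w6 i + w7 i) * |R i| := by
      have e0 : -(s ⬝ᵥ R) = ∑ i, -(s i * R i) := by
        rw [dotProduct, ← Finset.sum_neg_distrib]
      rw [e0, ← Finset.sum_add_distrib]
      exact Finset.sum_le_sum (fun i _ => hterm i)
    have h45 : ∑ i, (w4 i + w5 i) * |R i| ≤ (α * w3) * linfnorm R := by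
      calc ∑ i, (w4 i + w5 i) * |R i| ≤ ∑ i, (w4 i + w5 i) * linfnorm R :=
            Finset.sum_le_sum (fun i _ => mul_le_mul_of_nonneg_left
              (abs_le_linfnorm R i) (add_nonneg (h19 i) (h20 i)))
        _ = ((∑ i, w4 i) + (∑ i, w5 i)) * linfnorm R := by
            rw [← Finset.sum_mul, Finset.sum_add_distrib]
        _ ≤ (α * w3) * linfnorm R :=
            mul_le_mul_of_nonneg_right (by linarith) (linfnorm_nonneg R)
    have h67 : ∑ i, (w6 i + w7 i) * |R i| ≤ ((1 - α) * w3) * l1norm R := by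
      calc ∑ i, (w6 i + w7 i) * |R i| ≤ ∑ i, ((1 - α) * w3) * |R i| :=
            Finset.sum_le_sum (fun i _ => mul_le_mul_of_nonneg_right
              (by linarith [h11 i]) (abs_nonneg _))
        _ = ((1 - α) * w3) * l1norm R := by rw [l1norm, Finset.mul_sum]
    have hcomb : -(s ⬝ᵥ R) ≤ w3 * (α * linfnorm R + (1 - α) * l1norm R) := by
      nlinarith [hsum, h45, h67]
    have hfin : w3 * (α * linfnorm R + (1 - α) * l1norm R) ≤ w3 * τ :=
      mul_le_mul_of_nonneg_left hz h18
    nlinarith [hcomb, hfin]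
  have c1 : ∑ j, t j = -(τ * w3) + s ⬝ᵥ Mᵀ.mulVec y := by
    rw [← h12]
    congr 1
    rw [Matrix.dotProduct_mulVec, ← Matrix.mulVec_transpose, dotProduct_comm]
  have c2 : ∑ j, (w1 j + w2 j) * |z j| ≤ l1norm z := by
    rw [l1norm]
    refine Finset.sum_le_sum (fun j _ => ?_)
    calc (w1 j + w2 j) * |z j| ≤ 1 * |z j| :=
          mul_le_mul_of_nonneg_right (h9 j) (abs_nonneg _)
      _ = |z j| := one_mul _
  have c3 : ∑ j, (w1 j - w2 j) * z j ≤ ∑ j, (w1 j + w2 j) * |z j| := by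
    refine Finset.sum_le_sum (fun j _ => ?_)
    have hb1 : 0 ≤ w1 j * (|z j| - z j) :=
      mul_nonneg (h16 j) (by linarith [le_abs_self (z j)])
    have hb2 : 0 ≤ w2 j * (|z j| + z j) :=
      mul_nonneg (h17 j) (by linarith [neg_abs_le (z j)])
    nlinarith [hb1, hb2]
  linarith [c1, c2, c3, hdot, hsR]

/-- Lemma 3.1: `x*` is an optimal solution of the Dantzig selector problem
`min {‖x‖₁ : α‖Mᵀ(Ax−y)‖_∞ + (1−α)‖Mᵀ(Ax−y)‖₁ ≤ τ}` iff the KKT system has a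
solution; moreover, any solution of the KKT system satisfies `t = |x*|`,
`ξ ≥ ‖ϑ(x*)‖_∞` and `v ≥ |ϑ(x*)|` componentwise. -/
theorem DS_optimality_KKT (m n q : ℕ)
    (A : Matrix (Fin m) (Fin n) ℝ) (M : Matrix (Fin m) (Fin q) ℝ)
    (y : Fin m → ℝ) (τ α : ℝ) (hτ : 0 ≤ τ) (hα0 : 0 ≤ α) (hα1 : α ≤ 1)
    (xstar : Fin n → ℝ) :
    ((α * linfnorm (resid A M y xstar) + (1 - α) * l1norm (resid A M y xstar) ≤ τ ∧
        ∀ z : Fin n → ℝ,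
          α * linfnorm (resid A M y z) + (1 - α) * l1norm (resid A M y z) ≤ τ →
            l1norm xstar ≤ l1norm z) ↔
      (∃ (t : Fin n → ℝ) (ξ : ℝ) (v : Fin q → ℝ) (w1 w2 : Fin n → ℝ) (w3 : ℝ)
          (w4 w5 w6 w7 : Fin q → ℝ),
        KKTsysDS A M y τ α xstar t ξ v w1 w2 w3 w4 w5 w6 w7)) ∧
    (∀ (t : Fin n → ℝ) (ξ : ℝ) (v : Fin q → ℝ) (w1 w2 : Fin n → ℝ) (w3 : ℝ)
        (w4 w5 w6 w7 : Fin q → ℝ),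
      KKTsysDS A M y τ α xstar t ξ v w1 w2 w3 w4 w5 w6 w7 →
        t = (fun i => |xstar i|) ∧
        linfnorm (resid A M y xstar) ≤ ξ ∧
        (∀ i, |resid A M y xstar i| ≤ v i)) := by
  classical
  set G : Matrix (Fin q) (Fin n) ℝ := Mᵀ * A with hG
  set g : Fin q → ℝ := Mᵀ.mulVec y with hg
  have hres : ∀ (z : Fin n → ℝ) (i : Fin q),
      resid A M y z i = (∑ j, G i j * z j) - g i := by
    intro z i
    rw [resid_eq A M y z, ← hG, ← hg]
    simp [Matrix.mulVec, dotProduct]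
  constructor
  · constructor
    · -- forward: optimality implies KKT solvable
      rintro ⟨hfx, hopt⟩
      set P0 : (Fin n ⊕ (Fin n ⊕ (Unit ⊕ Fin q))) → ℝ := fun j =>
        match j with
        | Sum.inl j' => xstar j'
        | Sum.inr (Sum.inl j') => |xstar j'|
        | Sum.inr (Sum.inr (Sum.inl _)) => linfnorm (resid A M y xstar)
        | Sum.inr (Sum.inr (Sum.inr i)) => |resid A M y xstar i| with hP0
      have hfeasP : (bigA n q G α).mulVec P0 ≤ bigb n q g τ := by
        intro r
        rcases r with i | (i | (uu | (i | (i | (i | i)))))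
        · rw [bigA_row1]
          simp only [hP0, bigb]
          linarith [le_abs_self (xstar i)]
        · rw [bigA_row2]
          simp only [hP0, bigb]
          linarith [neg_abs_le (xstar i)]
        · rw [bigA_row3]
          simp only [hP0, bigb]
          have : ∑ j, |resid A M y xstar j| = l1norm (resid A M y xstar) := rfl
          rw [this]
          exact hfx
        · rw [bigA_row4]
          simp only [hP0, bigb]
          have h1 := abs_le_linfnorm (resid A M y xstar) i
          have h2 := hres xstar i
          have h3 := neg_abs_le (resid A M y xstar i)
          have h4 := le_abs_self (resid A M y xstar i)
          linarith
        · rw [bigA_row5]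
          simp only [hP0, bigb]
          have h1 := abs_le_linfnorm (resid A M y xstar) i
          have h2 := hres xstar i
          have h4 := le_abs_self (resid A M y xstar i)
          linarith
        · rw [bigA_row6]
          simp only [hP0, bigb]
          have h2 := hres xstar i
          have h4 := le_abs_self (resid A M y xstar i)
          linarith
        · rw [bigA_row7]
          simp only [hP0, bigb]
          have h2 := hres xstar i
          have h3 := neg_abs_le (resid A M y xstar i)
          linarith
      have hoptP : ∀ P, (bigA n q G α).mulVec P ≤ bigb n q g τ →
          bigc n q ⬝ᵥ P0 ≤ bigc n q ⬝ᵥ P := by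
        intro P hP
        set z : Fin n → ℝ := fun j => P (Sum.inl j) with hz
        have hr1 : ∀ j, P (Sum.inl j) - P (Sum.inr (Sum.inl j)) ≤ 0 := fun j => by
          have h0 := hP (Sum.inl j); rw [bigA_row1] at h0; simpa [bigb] using h0
        have hr2 : ∀ j, -P (Sum.inl j) - P (Sum.inr (Sum.inl j)) ≤ 0 := fun j => by
          have h0 := hP (Sum.inr (Sum.inl j)); rw [bigA_row2] at h0; simpa [bigb] using h0
        have hr3 : α * P (Sum.inr (Sum.inr (Sum.inl ()))) +
            (1 - α) * ∑ j, P (Sum.inr (Sum.inr (Sum.inr j))) ≤ τ := by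
          have h0 := hP (Sum.inr (Sum.inr (Sum.inl ()))); rw [bigA_row3] at h0
          simpa [bigb] using h0
        have hr4 : ∀ i, -(resid A M y z i) ≤ P (Sum.inr (Sum.inr (Sum.inl ()))) := by
          intro i
          have h0 := hP (Sum.inr (Sum.inr (Sum.inr (Sum.inl i))))
          rw [bigA_row4] at h0
          simp only [bigb] at h0
          have h2 := hres z i
          linarith
        have hr5 : ∀ i, resid A M y z i ≤ P (Sum.inr (Sum.inr (Sum.inl ()))) := by
          intro i
          have h0 := hP (Sum.inr (Sum.inr (Sum.inr (Sum.inr (Sum.inl i)))))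
          rw [bigA_row5] at h0
          simp only [bigb] at h0
          have h2 := hres z i
          linarith
        have hr6 : ∀ i, resid A M y z i ≤ P (Sum.inr (Sum.inr (Sum.inr i))) := by
          intro i
          have h0 := hP (Sum.inr (Sum.inr (Sum.inr (Sum.inr (Sum.inr (Sum.inl i))))))
          rw [bigA_row6] at h0
          simp only [bigb] at h0
          have h2 := hres z i
          linarith
        have hr7 : ∀ i, -(resid A M y z i) ≤ P (Sum.inr (Sum.inr (Sum.inr i))) := by
          intro i
          have h0 := hP (Sum.inr (Sum.inr (Sum.inr (Sum.inr (Sum.inr (Sum.inr i))))))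
          rw [bigA_row7] at h0
          simp only [bigb] at h0
          have h2 := hres z i
          linarith
        have hzfeas : α * linfnorm (resid A M y z) +
            (1 - α) * l1norm (resid A M y z) ≤ τ := by
          rcases Nat.eq_zero_or_pos q with hq | hq
          · rw [linfnorm_zero_of_isEmpty hq, l1norm_zero_of_isEmpty hq]
            simpa using hτ
          · have hξ0 : 0 ≤ P (Sum.inr (Sum.inr (Sum.inl ()))) := by
              have h4 := hr4 ⟨0, hq⟩
              have h5 := hr5 ⟨0, hq⟩
              have h6 := abs_nonneg (resid A M y z ⟨0, hq⟩)
              have h7 := le_abs_self (resid A M y z ⟨0, hq⟩)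
              have h8 := neg_abs_le (resid A M y z ⟨0, hq⟩)
              rcases le_or_gt 0 (resid A M y z ⟨0, hq⟩) with hc | hc
              · linarith
              · linarith
            have e1 : linfnorm (resid A M y z) ≤ P (Sum.inr (Sum.inr (Sum.inl ()))) :=
              linfnorm_le (fun i => abs_le.mpr ⟨by linarith [hr4 i], hr5 i⟩) hξ0
            have e2 : l1norm (resid A M y z) ≤ ∑ i, P (Sum.inr (Sum.inr (Sum.inr i))) := by
              rw [l1norm]
              exact Finset.sum_le_sum fun i _ =>
                abs_le.mpr ⟨by linarith [hr7 i], hr6 i⟩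
            have e3 : α * linfnorm (resid A M y z) ≤
                α * P (Sum.inr (Sum.inr (Sum.inl ()))) := mul_le_mul_of_nonneg_left e1 hα0
            have e4 : (1 - α) * l1norm (resid A M y z) ≤
                (1 - α) * ∑ i, P (Sum.inr (Sum.inr (Sum.inr i))) :=
              mul_le_mul_of_nonneg_left e2 (by linarith)
            linarith
        have hl1 := hopt z hzfeas
        rw [bigc_dot, bigc_dot]
        have e5 : ∑ j, P0 (Sum.inr (Sum.inl j)) = l1norm xstar := by
          simp [hP0, l1norm]
        have e6 : l1norm z ≤ ∑ j, P (Sum.inr (Sum.inl j)) := by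
          rw [l1norm]
          exact Finset.sum_le_sum fun j _ =>
            abs_le.mpr ⟨by linarith [hr2 j], by linarith [hr1 j]⟩
        rw [e5]
        linarith
      obtain ⟨u, hu0, hucol, hub⟩ :=
        lpDual (bigA n q G α) (bigb n q g τ) (bigc n q) P0 hfeasP hoptP
      set w1 : Fin n → ℝ := fun i => u (Sum.inl i) with hw1
      set w2 : Fin n → ℝ := fun i => u (Sum.inr (Sum.inl i)) with hw2
      set w3 : ℝ := u (Sum.inr (Sum.inr (Sum.inl ()))) with hw3
      set w4 : Fin q → ℝ := fun i => u (Sum.inr (Sum.inr (Sum.inr (Sum.inl i)))) with hw4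
      set w5 : Fin q → ℝ := fun i =>
        u (Sum.inr (Sum.inr (Sum.inr (Sum.inr (Sum.inl i))))) with hw5
      set w6 : Fin q → ℝ := fun i =>
        u (Sum.inr (Sum.inr (Sum.inr (Sum.inr (Sum.inr (Sum.inl i)))))) with hw6
      set w7 : Fin q → ℝ := fun i =>
        u (Sum.inr (Sum.inr (Sum.inr (Sum.inr (Sum.inr (Sum.inr i)))))) with hw7
      have hAtM : ∀ sv : Fin q → ℝ,
          Aᵀ.mulVec (M.mulVec sv) = fun j => ∑ i, G i j * sv i := by
        intro sv
        funext j
        rw [Matrix.mulVec_mulVec]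
        have hGT : Aᵀ * M = Gᵀ := by
          rw [hG, Matrix.transpose_mul, Matrix.transpose_transpose]
        rw [hGT]
        simp [Matrix.mulVec, dotProduct, Matrix.transpose_apply]
      refine ⟨fun i => |xstar i|, linfnorm (resid A M y xstar),
        fun i => |resid A M y xstar i|, w1, w2, w3, w4, w5, w6, w7,
        fun i => le_abs_self _, fun i => neg_le_abs _, ?_, ?_, ?_,
        fun i => le_abs_self _, fun i => neg_le_abs _, ?_, ?_, ?_, ?_, ?_,
        fun i => abs_nonneg _, linfnorm_nonneg _, fun i => abs_nonneg _,
        fun i => hu0 _, fun i => hu0 _, hu0 _, fun i => hu0 _, fun i => hu0 _,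
        fun i => hu0 _, fun i => hu0 _⟩
      · -- primal constraint 3
        have : ∑ i, |resid A M y xstar i| = l1norm (resid A M y xstar) := rfl
        rw [this]
        exact hfx
      · exact fun i => (abs_le.mp (abs_le_linfnorm _ i)).1
      · exact fun i => (abs_le.mp (abs_le_linfnorm _ i)).2
      · -- stationarity
        funext j
        have h0 := hucol (Sum.inl j)
        rw [bigA_col1] at h0
        have hc0 : bigc n q (Sum.inl j) = 0 := rfl
        rw [hc0] at h0
        simp only [Pi.add_apply, Pi.neg_apply, Pi.zero_apply]
        simp only [hAtM]
        have hexp : ∑ i, G i j * ((w4 - w5 - w6 + w7) i) =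
            ∑ i, w4 i * G i j - ∑ i, w5 i * G i j - ∑ i, w6 i * G i j
              + ∑ i, w7 i * G i j := by
          rw [← Finset.sum_sub_distrib, ← Finset.sum_sub_distrib, ← Finset.sum_add_distrib]
          exact Finset.sum_congr rfl fun i _ => by
            simp only [Pi.add_apply, Pi.sub_apply]; ring
        rw [hexp]
        simp only [hw1, hw2, hw4, hw5, hw6, hw7] at h0 ⊢
        linarith
      · -- w1 + w2 ≤ 1
        intro i
        have h0 := hucol (Sum.inr (Sum.inl i))
        rw [bigA_col2] at h0
        have hc0 : bigc n q (Sum.inr (Sum.inl i)) = 1 := rfl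
        rw [hc0] at h0
        linarith
      · -- xi column
        have h0 := hucol (Sum.inr (Sum.inr (Sum.inl ())))
        rw [bigA_col3] at h0
        have hc0 : bigc n q (Sum.inr (Sum.inr (Sum.inl ()))) = 0 := rfl
        rw [hc0] at h0
        linarith
      · -- v columns
        intro i
        have h0 := hucol (Sum.inr (Sum.inr (Sum.inr i)))
        rw [bigA_col4] at h0
        have hc0 : bigc n q (Sum.inr (Sum.inr (Sum.inr i))) = 0 := rfl
        rw [hc0] at h0
        linarith
      · -- objective equality
        have h0 := hub
        rw [bigb_dot, bigc_dot] at h0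
        have e5 : ∑ j, P0 (Sum.inr (Sum.inl j)) = ∑ j, |xstar j| := by
          simp [hP0]
        rw [e5] at h0
        have hyMs : y ⬝ᵥ M.mulVec (w4 - w5 - w6 + w7) =
            ∑ i, g i * ((w4 - w5 - w6 + w7) i) := by
          rw [Matrix.dotProduct_mulVec]
          have : y ᵥ* M = g := by rw [hg, Matrix.mulVec_transpose]
          rw [this, dotProduct]
        rw [hyMs]
        have hexp : ∑ i, g i * ((w4 - w5 - w6 + w7) i) =
            ∑ i, w4 i * g i - ∑ i, w5 i * g i - ∑ i, w6 i * g i + ∑ i, w7 i * g i := by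
          rw [← Finset.sum_sub_distrib, ← Finset.sum_sub_distrib, ← Finset.sum_add_distrib]
          exact Finset.sum_congr rfl fun i _ => by
            simp only [Pi.add_apply, Pi.sub_apply]; ring
        rw [hexp]
        simp only [hw3, hw4, hw5, hw6, hw7] at h0 ⊢
        linarith
    · -- backward: KKT implies optimality
      rintro ⟨t, ξ, v, w1, w2, w3, w4, w5, w6, w7, hk⟩
      obtain ⟨hfeas, habs, hwd⟩ :=
        kkt_weak A M y τ α hα0 hα1 xstar t ξ v w1 w2 w3 w4 w5 w6 w7 hk
      refine ⟨hfeas, fun z hz => ?_⟩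
      have hlb : l1norm xstar ≤ ∑ i, t i := by
        rw [l1norm]
        exact Finset.sum_le_sum fun i _ => habs i
      linarith [hwd z hz]
  · -- moreover
    intro t ξ v w1 w2 w3 w4 w5 w6 w7 hk
    obtain ⟨hfeas, habs, hwd⟩ :=
      kkt_weak A M y τ α hα0 hα1 xstar t ξ v w1 w2 w3 w4 w5 w6 w7 hk
    obtain ⟨h1, h2, h3, h4, h5, h6, h7, h8, h9, h10, h11, h12, h13, h14, h15,
      h16, h17, h18, h19, h20, h21, h22⟩ := hk
    refine ⟨?_, linfnorm_le (fun i => abs_le.mpr ⟨h4 i, h5 i⟩) h14,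
      fun i => abs_le.mpr ⟨by linarith [h7 i], h6 i⟩⟩
    have hub := hwd xstar hfeas
    have hlb : l1norm xstar ≤ ∑ i, t i := by
      rw [l1norm]
      exact Finset.sum_le_sum fun i _ => habs i
    have hzero : ∑ i, (t i - |xstar i|) = 0 := by
      rw [Finset.sum_sub_distrib]
      rw [l1norm] at hub hlb
      linarith
    funext i
    have hnn : ∀ j ∈ Finset.univ, 0 ≤ t j - |xstar j| :=
      fun j _ => sub_nonneg.mpr (habs j)
    have h0 := (Finset.sum_eq_zero_iff_of_nonneg hnn).mp hzero i (Finset.mem_univ i)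
    have : t i - |xstar i| = 0 := h0
    linarith
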